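/- The linear map on the centrally extended Lie algebra 𝔡̄_t^{(n)} = 𝔡_t^{(n)} ⊕ ℂc^{(1)} ⊕ ℂc^{(2)} (with t = d^n) defined by c^{(1)} ↦ c^{(2)}, c^{(2)} ↦ −c^{(1)}, and A ⊗ D^k Z^l ↦ d^{−nk}·(−d)^{nl}·A ⊗ Z^{−k} D^{l} for all A ∈ M_n(ℂ), k,l ∈ ℤ, is an automorphism of Lie algebras; i.e., it is bijective and preserves the bracket [X + λ1 c^{(1)} + λ2 c^{(2)}, Y + μ1 c^{(1)} + μ2 c^{(2)}] = XY − YX + φ^{(1)}(X,Y)c^{(1)} + φ^{(2)}(X,Y)c^{(2)}. -/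

import Mathlib

/-- The matrix quantum torus `𝔡_t^{(n)}`, with `(k,l)` recording `D^k Z^l`. -/
abbrev DT (n : ℕ) := (ℤ × ℤ) →₀ Matrix (Fin n) (Fin n) ℂ

/-- Product of `𝔡_t^{(n)}` (from `DZ = t·ZD`). -/
noncomputable def dmul (n : ℕ) (t : ℂ) (X Y : DT n) : DT n :=
  X.sum fun p A => Y.sum fun q B =>
    Finsupp.single (p.1 + q.1, p.2 + q.2) (t ^ (-(p.2 * q.1)) • (A * B))

/-- The 2-cocycle `φ^{(1)}`. -/
noncomputable def phi1 (n : ℕ) (t : ℂ) (X Y : DT n) : ℂ :=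
  X.sum fun p A => (p.2 : ℂ) * t ^ (p.1 * p.2) * (A * Y (-p.1, -p.2)).trace

/-- The 2-cocycle `φ^{(2)}`. -/
noncomputable def phi2 (n : ℕ) (t : ℂ) (X Y : DT n) : ℂ :=
  X.sum fun p A => (p.1 : ℂ) * t ^ (p.1 * p.2) * (A * Y (-p.1, -p.2)).trace

/-- The centrally extended Lie algebra `𝔡̄_t^{(n)} = 𝔡_t^{(n)} ⊕ ℂc^{(1)} ⊕ ℂc^{(2)}`. -/
abbrev DText (n : ℕ) := DT n × ℂ × ℂ

/-- The Lie bracket of `𝔡̄_t^{(n)}`: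
`[X + λ₁c¹ + λ₂c², Y + μ₁c¹ + μ₂c²] = XY − YX + φ¹(X,Y)c¹ + φ²(X,Y)c²`. -/
noncomputable def extBr (n : ℕ) (t : ℂ) (u v : DText n) : DText n :=
  (dmul n t u.1 v.1 - dmul n t v.1 u.1, phi1 n t u.1 v.1, phi2 n t u.1 v.1)

/-- The classical limit of Miki's automorphism: `c¹ ↦ c²`, `c² ↦ −c¹`, and
`A ⊗ D^k Z^l ↦ d^{−nk}·(−d)^{nl}·A ⊗ Z^{−k}D^l`, where
`Z^{−k}D^l = (d^n)^{k·l}·D^l Z^{−k}` (with `t = d^n`). -/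
noncomputable def miki (n : ℕ) (d : ℂ) (u : DText n) : DText n :=
  (u.1.sum fun p A => Finsupp.single (p.2, -p.1)
      ((d ^ (-(n : ℤ) * p.1) * (-d) ^ ((n : ℤ) * p.2) * (d ^ (n : ℤ)) ^ (p.1 * p.2)) • A),
   -u.2.2, u.2.1)

/-! ### auxiliary development -/

noncomputable def mc (n : ℕ) (d : ℂ) (p : ℤ × ℤ) : ℂ :=
  d ^ (-(n : ℤ) * p.1) * (-d) ^ ((n : ℤ) * p.2) * (d ^ (n : ℤ)) ^ (p.1 * p.2)

lemma mc_eq (n : ℕ) (d : ℂ) (hd : d ≠ 0) (p : ℤ × ℤ) :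
    mc n d p = (-1) ^ ((n:ℤ) * p.2) * d ^ ((n:ℤ) * (p.2 + p.1 * p.2 - p.1)) := by
  have h1 : (-d) = (-1) * d := by ring
  rw [mc, h1, mul_zpow, ← zpow_mul,
    show (n:ℤ) * (p.2 + p.1*p.2 - p.1) = (n:ℤ)*p.2 + (n:ℤ)*(p.1*p.2) + (-(n:ℤ)*p.1) by ring,
    zpow_add₀ hd, zpow_add₀ hd]
  ring

lemma mc_ne_zero (n : ℕ) (d : ℂ) (hd : d ≠ 0) (p : ℤ × ℤ) : mc n d p ≠ 0 := by
  rw [mc_eq n d hd]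
  exact mul_ne_zero (zpow_ne_zero _ (by norm_num)) (zpow_ne_zero _ hd)

lemma mc_mul (n : ℕ) (d : ℂ) (hd : d ≠ 0) (p q : ℤ × ℤ) :
    mc n d (p.1 + q.1, p.2 + q.2) * (d ^ (n:ℤ)) ^ (-(p.2 * q.1)) =
      (d ^ (n:ℤ)) ^ (-(-p.1 * q.2)) * (mc n d p * mc n d q) := by
  have h1 : (-1 : ℂ) ≠ 0 := by norm_num
  simp only [mc_eq n d hd, ← zpow_mul]
  rw [show ((-1:ℂ)^((n:ℤ)*(p.2+q.2)) * d^((n:ℤ)*((p.2+q.2)+(p.1+q.1)*(p.2+q.2)-(p.1+q.1)))) * d^((n:ℤ)*(-(p.2*q.1)))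
      = (-1:ℂ)^((n:ℤ)*(p.2+q.2)) * (d^((n:ℤ)*((p.2+q.2)+(p.1+q.1)*(p.2+q.2)-(p.1+q.1)) + (n:ℤ)*(-(p.2*q.1)))) by
      rw [zpow_add₀ hd]; ring]
  rw [show d^((n:ℤ)*(-(-p.1*q.2))) * (((-1:ℂ)^((n:ℤ)*p.2) * d^((n:ℤ)*(p.2+p.1*p.2-p.1))) * ((-1:ℂ)^((n:ℤ)*q.2) * d^((n:ℤ)*(q.2+q.1*q.2-q.1))))
      = ((-1:ℂ)^((n:ℤ)*p.2 + (n:ℤ)*q.2)) * (d^((n:ℤ)*(-(-p.1*q.2)) + ((n:ℤ)*(p.2+p.1*p.2-p.1) + (n:ℤ)*(q.2+q.1*q.2-q.1)))) by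
      rw [zpow_add₀ hd, zpow_add₀ hd, zpow_add₀ h1]; ring]
  rw [show (n:ℤ)*(p.2+q.2) = (n:ℤ)*p.2 + (n:ℤ)*q.2 by ring]
  congr 2
  ring

lemma mc_neg_mul (n : ℕ) (d : ℂ) (hd : d ≠ 0) (p : ℤ × ℤ) :
    mc n d p * mc n d (-p.1, -p.2) = (d ^ (n:ℤ)) ^ (p.1 * p.2) * (d ^ (n:ℤ)) ^ (p.1 * p.2) := by
  have h1 : (-1 : ℂ) ≠ 0 := by norm_num
  rw [mc_eq n d hd p, mc_eq n d hd (-p.1, -p.2)]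
  dsimp only
  rw [mul_mul_mul_comm, ← zpow_add₀ h1, ← zpow_add₀ hd, ← zpow_mul,
    show (n:ℤ)*p.2 + (n:ℤ)*(-p.2) = 0 by ring, zpow_zero, one_mul, ← zpow_add₀ hd]
  congr 1
  ring

/-! ### single / zero / add lemmas -/

lemma dmul_single_single (n : ℕ) (t : ℂ) (p q : ℤ × ℤ) (A B : Matrix (Fin n) (Fin n) ℂ) :
    dmul n t (Finsupp.single p A) (Finsupp.single q B) =
      Finsupp.single (p.1 + q.1, p.2 + q.2) (t ^ (-(p.2 * q.1)) • (A * B)) := by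
  unfold dmul
  rw [Finsupp.sum_single_index (by simp), Finsupp.sum_single_index (by simp)]

lemma dmul_zero_left (n : ℕ) (t : ℂ) (Y : DT n) : dmul n t 0 Y = 0 :=
  Finsupp.sum_zero_index

lemma dmul_zero_right (n : ℕ) (t : ℂ) (X : DT n) : dmul n t X 0 = 0 := by
  simp [dmul, Finsupp.sum_zero_index]

lemma dmul_add_left (n : ℕ) (t : ℂ) (X X' Y : DT n) :
    dmul n t (X + X') Y = dmul n t X Y + dmul n t X' Y := by
  unfold dmul
  refine Finsupp.sum_add_index' (fun p => by simp) fun p A A' => ?_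
  rw [← Finsupp.sum_add]
  exact Finsupp.sum_congr fun q _ => by rw [add_mul, smul_add, Finsupp.single_add]

lemma dmul_add_right (n : ℕ) (t : ℂ) (X Y Y' : DT n) :
    dmul n t X (Y + Y') = dmul n t X Y + dmul n t X Y' := by
  unfold dmul
  rw [← Finsupp.sum_add]
  refine Finsupp.sum_congr fun p _ => ?_
  exact Finsupp.sum_add_index' (fun q => by simp) fun q B B' => by
    rw [mul_add, smul_add, Finsupp.single_add]

lemma phi1_single (n : ℕ) (t : ℂ) (p : ℤ × ℤ) (A : Matrix (Fin n) (Fin n) ℂ) (Y : DT n) :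
    phi1 n t (Finsupp.single p A) Y
      = (p.2 : ℂ) * t ^ (p.1 * p.2) * (A * Y (-p.1, -p.2)).trace := by
  unfold phi1
  rw [Finsupp.sum_single_index (by simp)]

lemma phi2_single (n : ℕ) (t : ℂ) (p : ℤ × ℤ) (A : Matrix (Fin n) (Fin n) ℂ) (Y : DT n) :
    phi2 n t (Finsupp.single p A) Y
      = (p.1 : ℂ) * t ^ (p.1 * p.2) * (A * Y (-p.1, -p.2)).trace := by
  unfold phi2
  rw [Finsupp.sum_single_index (by simp)]

lemma phi1_zero_left (n : ℕ) (t : ℂ) (Y : DT n) : phi1 n t 0 Y = 0 := Finsupp.sum_zero_index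
lemma phi2_zero_left (n : ℕ) (t : ℂ) (Y : DT n) : phi2 n t 0 Y = 0 := Finsupp.sum_zero_index
lemma phi1_zero_right (n : ℕ) (t : ℂ) (X : DT n) : phi1 n t X 0 = 0 := by simp [phi1]
lemma phi2_zero_right (n : ℕ) (t : ℂ) (X : DT n) : phi2 n t X 0 = 0 := by simp [phi2]

lemma phi1_add_left (n : ℕ) (t : ℂ) (X X' Y : DT n) :
    phi1 n t (X + X') Y = phi1 n t X Y + phi1 n t X' Y :=
  Finsupp.sum_add_index' (fun p => by simp) fun p A A' => by
    rw [Matrix.add_mul, Matrix.trace_add, mul_add]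

lemma phi2_add_left (n : ℕ) (t : ℂ) (X X' Y : DT n) :
    phi2 n t (X + X') Y = phi2 n t X Y + phi2 n t X' Y :=
  Finsupp.sum_add_index' (fun p => by simp) fun p A A' => by
    rw [Matrix.add_mul, Matrix.trace_add, mul_add]

lemma phi1_add_right (n : ℕ) (t : ℂ) (X Y Y' : DT n) :
    phi1 n t X (Y + Y') = phi1 n t X Y + phi1 n t X Y' := by
  unfold phi1
  rw [← Finsupp.sum_add]
  exact Finsupp.sum_congr fun p _ => by
    rw [Finsupp.add_apply, Matrix.mul_add, Matrix.trace_add, mul_add]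

lemma phi2_add_right (n : ℕ) (t : ℂ) (X Y Y' : DT n) :
    phi2 n t X (Y + Y') = phi2 n t X Y + phi2 n t X Y' := by
  unfold phi2
  rw [← Finsupp.sum_add]
  exact Finsupp.sum_congr fun p _ => by
    rw [Finsupp.add_apply, Matrix.mul_add, Matrix.trace_add, mul_add]

/-! ### the map on the torus part -/

noncomputable def mikiF (n : ℕ) (d : ℂ) (X : DT n) : DT n :=
  X.sum fun p A => Finsupp.single (p.2, -p.1) (mc n d p • A)

lemma miki_def (n : ℕ) (d : ℂ) (u : DText n) :
    miki n d u = (mikiF n d u.1, -u.2.2, u.2.1) := rfl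

lemma mikiF_single (n : ℕ) (d : ℂ) (p : ℤ × ℤ) (A : Matrix (Fin n) (Fin n) ℂ) :
    mikiF n d (Finsupp.single p A) = Finsupp.single (p.2, -p.1) (mc n d p • A) := by
  unfold mikiF
  rw [Finsupp.sum_single_index (by simp)]

lemma mikiF_zero (n : ℕ) (d : ℂ) : mikiF n d 0 = 0 := Finsupp.sum_zero_index

lemma mikiF_add (n : ℕ) (d : ℂ) (X Y : DT n) :
    mikiF n d (X + Y) = mikiF n d X + mikiF n d Y :=
  Finsupp.sum_add_index' (fun p => by simp) fun p A A' => by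
    rw [smul_add, Finsupp.single_add]

lemma mikiF_smul (n : ℕ) (d : ℂ) (c : ℂ) (X : DT n) :
    mikiF n d (c • X) = c • mikiF n d X := by
  unfold mikiF
  rw [Finsupp.sum_smul_index' (fun p => by simp), Finsupp.smul_sum]
  exact Finsupp.sum_congr fun p _ => by rw [smul_comm, Finsupp.smul_single]

lemma mikiF_sub (n : ℕ) (d : ℂ) (X Y : DT n) :
    mikiF n d (X - Y) = mikiF n d X - mikiF n d Y := by
  have h := mikiF_smul n d (-1) Y
  rw [neg_one_smul] at h
  rw [sub_eq_add_neg, mikiF_add, h, neg_one_smul, ← sub_eq_add_neg]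

noncomputable def mikiG (n : ℕ) (d : ℂ) (Y : DT n) : DT n :=
  Y.sum fun q B => Finsupp.single (-q.2, q.1) ((mc n d (-q.2, q.1))⁻¹ • B)

lemma mikiG_single (n : ℕ) (d : ℂ) (q : ℤ × ℤ) (B : Matrix (Fin n) (Fin n) ℂ) :
    mikiG n d (Finsupp.single q B) = Finsupp.single (-q.2, q.1) ((mc n d (-q.2, q.1))⁻¹ • B) := by
  unfold mikiG
  rw [Finsupp.sum_single_index (by simp)]

lemma mikiG_zero (n : ℕ) (d : ℂ) : mikiG n d 0 = 0 := Finsupp.sum_zero_index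

lemma mikiG_add (n : ℕ) (d : ℂ) (X Y : DT n) :
    mikiG n d (X + Y) = mikiG n d X + mikiG n d Y :=
  Finsupp.sum_add_index' (fun p => by simp) fun p A A' => by
    rw [smul_add, Finsupp.single_add]

lemma mikiG_mikiF (n : ℕ) (d : ℂ) (hd : d ≠ 0) (X : DT n) :
    mikiG n d (mikiF n d X) = X := by
  induction X using Finsupp.induction_linear with
  | zero => rw [mikiF_zero, mikiG_zero]
  | add f g hf hg => rw [mikiF_add, mikiG_add, hf, hg]
  | single p A =>
      rw [mikiF_single, mikiG_single]
      dsimp only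
      rw [neg_neg, smul_smul, inv_mul_cancel₀ (mc_ne_zero n d hd _), one_smul]

lemma mikiF_mikiG (n : ℕ) (d : ℂ) (hd : d ≠ 0) (Y : DT n) :
    mikiF n d (mikiG n d Y) = Y := by
  induction Y using Finsupp.induction_linear with
  | zero => rw [mikiG_zero, mikiF_zero]
  | add f g hf hg => rw [mikiG_add, mikiF_add, hf, hg]
  | single q B =>
      rw [mikiG_single, mikiF_single]
      dsimp only
      rw [neg_neg, smul_smul, mul_inv_cancel₀ (mc_ne_zero n d hd _), one_smul]

/-! ### the three key identities -/

lemma key_mul (n : ℕ) (d : ℂ) (hd : d ≠ 0) (X Y : DT n) :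
    mikiF n d (dmul n (d ^ (n:ℤ)) X Y)
      = dmul n (d ^ (n:ℤ)) (mikiF n d X) (mikiF n d Y) := by
  induction X using Finsupp.induction_linear with
  | zero => rw [dmul_zero_left, mikiF_zero, dmul_zero_left]
  | add f g hf hg => rw [dmul_add_left, mikiF_add, mikiF_add, hf, hg, dmul_add_left]
  | single p A =>
      induction Y using Finsupp.induction_linear with
      | zero => rw [dmul_zero_right, mikiF_zero, dmul_zero_right]
      | add f g hf hg => rw [dmul_add_right, mikiF_add, mikiF_add, hf, hg, dmul_add_right]
      | single q B =>
          rw [dmul_single_single, mikiF_single, mikiF_single, mikiF_single, dmul_single_single]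
          dsimp only
          rw [neg_add, smul_smul, Matrix.smul_mul, Matrix.mul_smul, smul_smul, smul_smul]
          have hsc : mc n d (p.1 + q.1, p.2 + q.2) * (d ^ (n:ℤ)) ^ (-(p.2 * q.1))
              = (d ^ (n:ℤ)) ^ (-(-p.1 * q.2)) * mc n d p * mc n d q := by
            linear_combination mc_mul n d hd p q
          rw [hsc]

lemma key_phi1 (n : ℕ) (d : ℂ) (hd : d ≠ 0) (X Y : DT n) :
    phi1 n (d ^ (n:ℤ)) (mikiF n d X) (mikiF n d Y) = -phi2 n (d ^ (n:ℤ)) X Y := by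
  induction X using Finsupp.induction_linear with
  | zero => rw [mikiF_zero, phi1_zero_left, phi2_zero_left, neg_zero]
  | add f g hf hg => rw [mikiF_add, phi1_add_left, phi2_add_left, hf, hg, neg_add]
  | single p A =>
      induction Y using Finsupp.induction_linear with
      | zero => rw [mikiF_zero, phi1_zero_right, phi2_zero_right, neg_zero]
      | add f g hf hg => rw [mikiF_add, phi1_add_right, phi2_add_right, hf, hg, neg_add]
      | single q B =>
          rw [mikiF_single, mikiF_single, phi1_single, phi2_single]
          dsimp only
          rw [Finsupp.single_apply, Finsupp.single_apply]
          by_cases h : q = (-p.1, -p.2)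
          · subst h
            dsimp only
            simp only [neg_neg, if_true]
            rw [Matrix.smul_mul, Matrix.mul_smul, Matrix.trace_smul, Matrix.trace_smul,
              smul_eq_mul, smul_eq_mul]
            have h3 : (d ^ (n:ℤ)) ^ (p.2 * -p.1) * (mc n d p * mc n d (-p.1, -p.2))
                = (d ^ (n:ℤ)) ^ (p.1 * p.2) := by
              rw [mc_neg_mul n d hd p, ← zpow_add₀ (zpow_ne_zero _ hd),
                ← zpow_add₀ (zpow_ne_zero _ hd),
                show p.2 * -p.1 + (p.1 * p.2 + p.1 * p.2) = p.1 * p.2 by ring]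
            push_cast
            linear_combination (-(p.1 : ℂ) * (A * B).trace) * h3
          · have hne : ¬(((q.2, -q.1) : ℤ × ℤ) = (-p.2, - -p.1)) := by
              intro hh
              apply h
              simp only [Prod.ext_iff] at hh ⊢
              omega
            rw [if_neg hne, if_neg h]
            simp

lemma key_phi2 (n : ℕ) (d : ℂ) (hd : d ≠ 0) (X Y : DT n) :
    phi2 n (d ^ (n:ℤ)) (mikiF n d X) (mikiF n d Y) = phi1 n (d ^ (n:ℤ)) X Y := by
  induction X using Finsupp.induction_linear with
  | zero => rw [mikiF_zero, phi2_zero_left, phi1_zero_left]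
  | add f g hf hg => rw [mikiF_add, phi2_add_left, phi1_add_left, hf, hg]
  | single p A =>
      induction Y using Finsupp.induction_linear with
      | zero => rw [mikiF_zero, phi2_zero_right, phi1_zero_right]
      | add f g hf hg => rw [mikiF_add, phi2_add_right, phi1_add_right, hf, hg]
      | single q B =>
          rw [mikiF_single, mikiF_single, phi2_single, phi1_single]
          dsimp only
          rw [Finsupp.single_apply, Finsupp.single_apply]
          by_cases h : q = (-p.1, -p.2)
          · subst h
            dsimp only
            simp only [neg_neg, if_true]
            rw [Matrix.smul_mul, Matrix.mul_smul, Matrix.trace_smul, Matrix.trace_smul,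
              smul_eq_mul, smul_eq_mul]
            have h3 : (d ^ (n:ℤ)) ^ (p.2 * -p.1) * (mc n d p * mc n d (-p.1, -p.2))
                = (d ^ (n:ℤ)) ^ (p.1 * p.2) := by
              rw [mc_neg_mul n d hd p, ← zpow_add₀ (zpow_ne_zero _ hd),
                ← zpow_add₀ (zpow_ne_zero _ hd),
                show p.2 * -p.1 + (p.1 * p.2 + p.1 * p.2) = p.1 * p.2 by ring]
            push_cast
            linear_combination ((p.2 : ℂ) * (A * B).trace) * h3
          · have hne : ¬(((q.2, -q.1) : ℤ × ℤ) = (-p.2, - -p.1)) := by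
              intro hh
              apply h
              simp only [Prod.ext_iff] at hh ⊢
              omega
            rw [if_neg hne, if_neg h]
            simp

/-- The map `miki` is a Lie algebra automorphism of `𝔡̄_{d^n}^{(n)}`: it is linear,
bijective, sends `c¹ ↦ c²`, `c² ↦ −c¹`, and preserves the bracket. -/
theorem stmt11 (n : ℕ) (d : ℂ) (hd : d ≠ 0) :
    Function.Bijective (miki n d) ∧
    (∀ u v : DText n, miki n d (u + v) = miki n d u + miki n d v) ∧
    (∀ (c : ℂ) (u : DText n), miki n d (c • u) = c • miki n d u) ∧
    (∀ a b : ℂ, miki n d (0, a, b) = (0, -b, a)) ∧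
    (∀ u v : DText n,
      miki n d (extBr n (d ^ (n : ℤ)) u v) =
        extBr n (d ^ (n : ℤ)) (miki n d u) (miki n d v)) := by
  refine ⟨?_, ?_, ?_, ?_, ?_⟩
  · refine Function.bijective_iff_has_inverse.mpr
      ⟨fun u => (mikiG n d u.1, u.2.2, -u.2.1), fun u => ?_, fun u => ?_⟩
    · show (mikiG n d (mikiF n d u.1), u.2.1, -(-u.2.2)) = u
      rw [mikiG_mikiF n d hd, neg_neg]
    · show (mikiF n d (mikiG n d u.1), -(-u.2.1), u.2.2) = u
      rw [mikiF_mikiG n d hd, neg_neg]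
  · intro u v
    rw [miki_def, miki_def, miki_def]
    refine Prod.ext ?_ (Prod.ext ?_ ?_) <;> simp [mikiF_add, neg_add] <;> ring
  · intro c u
    rw [miki_def, miki_def]
    refine Prod.ext ?_ (Prod.ext ?_ ?_) <;>
      simp [mikiF_smul, smul_eq_mul, mul_neg]
  · intro a b
    show (mikiF n d 0, -b, a) = ((0 : DT n), -b, a)
    rw [mikiF_zero]
  · intro u v
    simp only [miki_def, extBr]
    refine Prod.ext ?_ (Prod.ext ?_ ?_)
    · dsimp only
      rw [mikiF_sub, key_mul n d hd, key_mul n d hd]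
    · dsimp only
      rw [key_phi1 n d hd]
    · dsimp only
      rw [key_phi2 n d hd]
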